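/- Let 𝔣 : ℝ → ℝ be Lipschitz continuous and η0 < η1 real constants. If η ∈ C²(0,1) ∩ C[0,1] solves η'' = 𝔣(η) on (0,1) with η(0) = η0, η(1) = η1, and satisfies η0 < η(x) < η1 for all x ∈ (0,1), then η is strictly increasing on [0,1], and moreover any two such solutions coincide. -/

import Mathlib

open Set intervalIntegral MeasureTheory

noncomputable def Ffun (𝔣 : ℝ → ℝ) (w : ℝ) : ℝ := ∫ t in (0:ℝ)..w, 𝔣 t
noncomputable def Gfun (𝔣 : ℝ → ℝ) (E w : ℝ) : ℝ := Real.sqrt (2*(Ffun 𝔣 w + E))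

structure Sol (𝔣 : ℝ → ℝ) (η0 η1 : ℝ) (η η' : ℝ → ℝ) : Prop where
  cont : ContinuousOn η (Set.Icc 0 1)
  deriv : ∀ x ∈ Set.Ioo (0:ℝ) 1, HasDerivAt η (η' x) x
  deriv2 : ∀ x ∈ Set.Ioo (0:ℝ) 1, HasDerivAt η' (𝔣 (η x)) x
  b0 : η 0 = η0
  b1 : η 1 = η1
  pinch : ∀ x ∈ Set.Ioo (0:ℝ) 1, η0 < η x ∧ η x < η1

lemma Ffun_hasDerivAt {𝔣 : ℝ → ℝ} (hcf : Continuous 𝔣) (v : ℝ) :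
    HasDerivAt (Ffun 𝔣) (𝔣 v) v :=
  intervalIntegral.integral_hasDerivAt_right (hcf.intervalIntegrable _ _)
    (hcf.stronglyMeasurableAtFilter _ _) hcf.continuousAt

lemma sol_props {𝔣 : ℝ → ℝ} {K : NNReal} (hf : LipschitzWith K 𝔣)
    {η0 η1 : ℝ} (hη01 : η0 < η1) {η η' : ℝ → ℝ} (hs : Sol 𝔣 η0 η1 η η') :
    StrictMonoOn η (Set.Icc 0 1) ∧
    ∃ E : ℝ, (∀ x ∈ Set.Ioo (0:ℝ) 1, 0 < η' x ∧ η' x = Gfun 𝔣 E (η x)) ∧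
      (∀ w ∈ Set.Ioo η0 η1, 0 < Ffun 𝔣 w + E ∧ ∃ x ∈ Set.Ioo (0:ℝ) 1, η x = w) := by
  obtain ⟨hcont, hderiv, hderiv2, hb0, hb1, hpinch⟩ := hs
  have hcf : Continuous 𝔣 := hf.continuous
  -- energy
  set En : ℝ → ℝ := fun x => (η' x)^2/2 - Ffun 𝔣 (η x) with hEn_def
  have hEn' : ∀ x ∈ Set.Ioo (0:ℝ) 1, HasDerivAt En 0 x := by
    intro x hx
    have h1 : HasDerivAt (fun y => (η' y)^2/2)
        ((2 * η' x ^ 1 * 𝔣 (η x))/2) x := ((hderiv2 x hx).pow 2).div_const 2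
    have h2 : HasDerivAt (fun y => Ffun 𝔣 (η y)) (𝔣 (η x) * η' x) x :=
      (Ffun_hasDerivAt hcf (η x)).comp x (hderiv x hx)
    have := h1.sub h2
    refine this.congr_deriv ?_
    ring
  have hEconst : ∀ a ∈ Set.Ioo (0:ℝ) 1, ∀ b ∈ Set.Ioo (0:ℝ) 1, a ≤ b → En b = En a := by
    intro a ha b hb hab
    have hsub : Set.Icc a b ⊆ Set.Ioo (0:ℝ) 1 := fun z hz =>
      ⟨lt_of_lt_of_le ha.1 hz.1, lt_of_le_of_lt hz.2 hb.2⟩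
    exact constant_of_has_deriv_right_zero
      (continuousOn_of_forall_continuousAt fun z hz => ((hEn' z (hsub hz)).continuousAt))
      (fun z hz => (hEn' z (hsub (Set.Ico_subset_Icc_self hz))).hasDerivWithinAt)
      b ⟨hab, le_rfl⟩
  have hEcst : ∀ a ∈ Set.Ioo (0:ℝ) 1, ∀ b ∈ Set.Ioo (0:ℝ) 1, En a = En b := by
    intro a ha b hb
    rcases le_total a b with h | h
    · exact (hEconst a ha b hb h).symm
    · exact hEconst b hb a ha h
  -- reflection: η' never vanishes
  have hne0 : ∀ c ∈ Set.Ioo (0:ℝ) 1, η' c ≠ 0 := by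
    intro c hc h0
    set a' : ℝ := max 0 (2*c - 1) with ha'def
    set b' : ℝ := min 1 (2*c) with hb'def
    have hcab : c ∈ Set.Ioo a' b' :=
      ⟨max_lt hc.1 (by linarith [hc.2]), lt_min hc.2 (by linarith [hc.1])⟩
    have hab' : a' < b' := hcab.1.trans hcab.2
    have hv : LipschitzWith (max 1 (K*1)) (fun p : ℝ × ℝ => (p.2, 𝔣 p.1)) :=
      LipschitzWith.prod_snd.prodMk (hf.comp LipschitzWith.prod_fst)
    have hEqOn : Set.EqOn (fun x => (η x, η' x))
        (fun x => (η (2*c - x), -η' (2*c - x))) (Set.Ioo a' b') := by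
      apply ODE_solution_unique_of_mem_Ioo (v := fun _ p => (p.2, 𝔣 p.1))
        (s := fun _ => Set.univ) (fun _ _ => hv.lipschitzOnWith) hcab
      · intro t ht
        have ht1 : t ∈ Set.Ioo (0:ℝ) 1 :=
          ⟨lt_of_le_of_lt (le_max_left 0 _) ht.1, lt_of_lt_of_le ht.2 (min_le_left 1 _)⟩
        exact ⟨(hderiv t ht1).prodMk (hderiv2 t ht1), trivial⟩
      · intro t ht
        have ht2 : 2*c - t ∈ Set.Ioo (0:ℝ) 1 := by
          constructor
          · have : t < 2*c := lt_of_lt_of_le ht.2 (min_le_right 1 _)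
            linarith
          · have : 2*c - 1 ≤ a' := le_max_right 0 _
            have := ht.1
            linarith
        have hin : HasDerivAt (fun x : ℝ => 2*c - x) (-1) t := by
          simpa using (hasDerivAt_id t).const_sub (2*c)
        have g1 : HasDerivAt (fun x => η (2*c - x)) (η' (2*c - t) * (-1)) t :=
          (hderiv _ ht2).comp t hin
        have g2 : HasDerivAt (fun x => -η' (2*c - x)) (-(𝔣 (η (2*c - t)) * (-1))) t :=
          ((hderiv2 _ ht2).comp t hin).neg
        refine ⟨?_, trivial⟩
        have hp := g1.prodMk g2
        refine hp.congr_deriv (Prod.ext ?_ ?_) <;> dsimp only <;> ring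
      · show (η c, η' c) = (η (2*c - c), -η' (2*c - c))
        have hcc : 2*c - c = c := by ring
        rw [hcc, h0]
        norm_num
    have hsym : ∀ t ∈ Set.Ioo a' b', η t = η (2*c - t) := fun t ht =>
      congrArg Prod.fst (hEqOn ht)
    have hb'I : b' ∈ Set.Icc (0:ℝ) 1 :=
      ⟨le_min zero_le_one (by linarith [hc.1]), min_le_left 1 _⟩
    have h2cb'I : 2*c - b' ∈ Set.Icc (0:ℝ) 1 := by
      constructor
      · have : b' ≤ 2*c := min_le_right 1 _
        linarith
      · have h1 : b' = min 1 (2*c) := hb'def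
        have : 2*c - 1 ≤ b' := le_min (by linarith [hc.2]) (by linarith) |>.trans_eq h1.symm |> (fun h => h)
        linarith [le_min (show (2:ℝ)*c - 1 ≤ 1 by linarith [hc.2]) (show (2:ℝ)*c - 1 ≤ 2*c by linarith) |>.trans_eq hb'def.symm]
    have hnb : (nhdsWithin b' (Set.Ioo a' b')).NeBot := by
      apply mem_closure_iff_nhdsWithin_neBot.1
      rw [closure_Ioo hab'.ne]
      exact Set.right_mem_Icc.2 hab'.le
    have hIoosub : Set.Ioo a' b' ⊆ Set.Icc (0:ℝ) 1 := fun z hz =>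
      ⟨(le_max_left 0 _).trans hz.1.le, hz.2.le.trans (min_le_left 1 _)⟩
    have t1 : Filter.Tendsto η (nhdsWithin b' (Set.Ioo a' b')) (nhds (η b')) :=
      (hcont b' hb'I).mono hIoosub
    have inner : Filter.Tendsto (fun x : ℝ => 2*c - x) (nhdsWithin b' (Set.Ioo a' b'))
        (nhdsWithin (2*c - b') (Set.Icc (0:ℝ) 1)) := by
      apply tendsto_nhdsWithin_of_tendsto_nhds_of_eventually_within
      · exact (Filter.Tendsto.mono_left ((continuous_const.sub continuous_id).tendsto b') nhdsWithin_le_nhds)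
      · filter_upwards [eventually_mem_nhdsWithin] with z hz
        constructor
        · have : z < 2*c := lt_of_lt_of_le hz.2 (min_le_right 1 _)
          linarith
        · have h2 : 2*c - 1 ≤ a' := le_max_right 0 _
          have := hz.1
          linarith
    have t2 : Filter.Tendsto (fun x : ℝ => η (2*c - x)) (nhdsWithin b' (Set.Ioo a' b'))
        (nhds (η (2*c - b'))) := Filter.Tendsto.comp (hcont _ h2cb'I) inner
    have hev : η =ᶠ[nhdsWithin b' (Set.Ioo a' b')] fun x => η (2*c - x) := by
      filter_upwards [eventually_mem_nhdsWithin] with z hz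
      exact hsym z hz
    have heq_lim : η b' = η (2*c - b') := tendsto_nhds_unique (t1.congr' hev) t2
    rcases le_or_gt (2*c) 1 with hcase | hcase
    · have hb'' : b' = 2*c := min_eq_right hcase
      rw [hb''] at heq_lim
      have hkey : η (2*c) = η 0 := by
        simpa using heq_lim
      rcases eq_or_lt_of_le hcase with h1 | h1
      · rw [h1, hb1, hb0] at hkey
        exact absurd hkey (ne_of_gt hη01)
      · have h2c : 2*c ∈ Set.Ioo (0:ℝ) 1 := ⟨by linarith [hc.1], h1⟩
        rw [hb0] at hkey
        have := (hpinch _ h2c).1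
        rw [hkey] at this
        exact lt_irrefl _ this
    · have hb'' : b' = 1 := min_eq_left hcase.le
      rw [hb''] at heq_lim
      have h2c : 2*c - 1 ∈ Set.Ioo (0:ℝ) 1 := ⟨by linarith, by linarith [hc.2]⟩
      rw [hb1] at heq_lim
      have := (hpinch _ h2c).2
      rw [← heq_lim] at this
      exact lt_irrefl _ this
  -- positivity of η'
  have hpos : ∀ x ∈ Set.Ioo (0:ℝ) 1, 0 < η' x := by
    by_contra h
    push_neg at h
    obtain ⟨a, ha, hle⟩ := h
    have hlt : η' a < 0 := lt_of_le_of_ne hle (hne0 a ha)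
    have hall : ∀ x ∈ Set.Ioo (0:ℝ) 1, η' x < 0 := by
      intro b hb
      by_contra hble
      push_neg at hble
      have hcd : ContinuousOn η' (Set.uIcc a b) := by
        have hsub : Set.uIcc a b ⊆ Set.Ioo (0:ℝ) 1 :=
          Set.ordConnected_Ioo.uIcc_subset ha hb
        exact continuousOn_of_forall_continuousAt fun z hz =>
          (hderiv2 z (hsub hz)).continuousAt
      have h0m : (0:ℝ) ∈ Set.uIcc (η' a) (η' b) :=
        Set.mem_uIcc.2 (Or.inl ⟨hlt.le, hble⟩)
      obtain ⟨c, hc, hc0⟩ := intermediate_value_uIcc hcd h0m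
      exact hne0 c (Set.ordConnected_Ioo.uIcc_subset ha hb hc) hc0
    have hanti : StrictAntiOn η (Set.Icc a 1) := by
      apply strictAntiOn_of_deriv_neg (convex_Icc a 1)
        (hcont.mono (Set.Icc_subset_Icc ha.1.le le_rfl))
      intro x hx
      rw [interior_Icc] at hx
      have hx' : x ∈ Set.Ioo (0:ℝ) 1 := ⟨lt_trans ha.1 hx.1, hx.2⟩
      rw [(hderiv x hx').deriv]
      exact hall x hx'
    have h1a : η 1 < η a := hanti ⟨le_rfl, ha.2.le⟩ ⟨ha.2.le, le_rfl⟩ ha.2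
    rw [hb1] at h1a
    exact absurd (hpinch a ha).2 (not_lt.2 h1a.le)
  -- strict monotonicity
  have hmono : StrictMonoOn η (Set.Icc 0 1) := by
    apply strictMonoOn_of_deriv_pos (convex_Icc 0 1) hcont
    intro x hx
    rw [interior_Icc] at hx
    rw [(hderiv x hx).deriv]
    exact hpos x hx
  -- surjectivity
  have hsurj : ∀ w ∈ Set.Ioo η0 η1, ∃ x ∈ Set.Ioo (0:ℝ) 1, η x = w := by
    intro w hw
    have : Set.Ioo (η 0) (η 1) ⊆ η '' Set.Ioo 0 1 :=
      intermediate_value_Ioo zero_le_one hcont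
    obtain ⟨x, hx, hxw⟩ := this (by rw [hb0, hb1]; exact hw)
    exact ⟨x, hx, hxw⟩
  -- energy constant value
  have hhalf : (1/2 : ℝ) ∈ Set.Ioo (0:ℝ) 1 := by norm_num
  refine ⟨hmono, En (1/2), ?_, ?_⟩
  · intro x hx
    have hE : En x = En (1/2) := hEcst x hx (1/2) hhalf
    have hsq : (η' x)^2 = 2*(Ffun 𝔣 (η x) + En (1/2)) := by
      simp only [hEn_def] at hE ⊢
      linarith [hE]
    refine ⟨hpos x hx, ?_⟩
    rw [Gfun, ← hsq, Real.sqrt_sq (hpos x hx).le]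
  · intro w hw
    obtain ⟨x, hx, hxw⟩ := hsurj w hw
    have hE : En x = En (1/2) := hEcst x hx (1/2) hhalf
    have hsq : (η' x)^2 = 2*(Ffun 𝔣 (η x) + En (1/2)) := by
      simp only [hEn_def] at hE ⊢
      linarith [hE]
    refine ⟨?_, x, hx, hxw⟩
    have := hpos x hx
    rw [hxw] at hsq
    nlinarith [hsq, this]

lemma time_eq {𝔣 : ℝ → ℝ} (hcf : Continuous 𝔣) {η0 η1 : ℝ} {η η' : ℝ → ℝ} {E : ℝ}
    (hderiv : ∀ x ∈ Set.Ioo (0:ℝ) 1, HasDerivAt η (η' x) x)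
    (hmem : ∀ x ∈ Set.Ioo (0:ℝ) 1, η x ∈ Set.Ioo η0 η1)
    (hposF : ∀ w ∈ Set.Ioo η0 η1, 0 < Ffun 𝔣 w + E)
    (hE : ∀ x ∈ Set.Ioo (0:ℝ) 1, η' x = Gfun 𝔣 E (η x))
    {x₁ x₂ : ℝ} (h1 : x₁ ∈ Set.Ioo (0:ℝ) 1) (h2 : x₂ ∈ Set.Ioo (0:ℝ) 1) (h12 : x₁ ≤ x₂) :
    ∫ w in (η x₁)..(η x₂), (Gfun 𝔣 E w)⁻¹ = x₂ - x₁ := by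
  have hFc : Continuous (Ffun 𝔣) := by
    rw [continuous_iff_continuousAt]
    exact fun v => (Ffun_hasDerivAt hcf v).continuousAt
  have hGpos : ∀ w ∈ Set.Ioo η0 η1, 0 < Gfun 𝔣 E w := by
    intro w hw
    exact Real.sqrt_pos.2 (by linarith [hposF w hw])
  have hGcont : ContinuousOn (fun w => (Gfun 𝔣 E w)⁻¹) (Set.Ioo η0 η1) := by
    apply ContinuousOn.inv₀
    · exact (Real.continuous_sqrt.comp (continuous_const.mul (hFc.add continuous_const))).continuousOn
    · exact fun w hw => (hGpos w hw).ne'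
  have hA : ∀ v ∈ Set.Ioo η0 η1,
      HasDerivAt (fun v => ∫ w in (η x₁)..v, (Gfun 𝔣 E w)⁻¹) (Gfun 𝔣 E v)⁻¹ v := by
    intro v hv
    apply intervalIntegral.integral_hasDerivAt_right
    · exact (hGcont.mono (Set.ordConnected_Ioo.uIcc_subset (hmem x₁ h1) hv)).intervalIntegrable
    · exact hGcont.stronglyMeasurableAtFilter isOpen_Ioo v hv
    · exact hGcont.continuousAt (isOpen_Ioo.mem_nhds hv)
  set φ : ℝ → ℝ := fun x => (∫ w in (η x₁)..(η x), (Gfun 𝔣 E w)⁻¹) - x with hφdef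
  have hsub : Set.Icc x₁ x₂ ⊆ Set.Ioo (0:ℝ) 1 := fun z hz =>
    ⟨lt_of_lt_of_le h1.1 hz.1, lt_of_le_of_lt hz.2 h2.2⟩
  have hφ' : ∀ x ∈ Set.Icc x₁ x₂, HasDerivAt φ 0 x := by
    intro x hx
    have hx' := hsub hx
    have hc : HasDerivAt (fun x => ∫ w in (η x₁)..(η x), (Gfun 𝔣 E w)⁻¹)
        ((Gfun 𝔣 E (η x))⁻¹ * η' x) x :=
      (hA (η x) (hmem x hx')).comp x (hderiv x hx')
    have := hc.sub (hasDerivAt_id x)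
    refine this.congr_deriv ?_
    rw [hE x hx']
    field_simp [(hGpos (η x) (hmem x hx')).ne']
    ring
  have hconst := constant_of_has_deriv_right_zero
    (continuousOn_of_forall_continuousAt fun z hz => (hφ' z hz).continuousAt)
    (fun z hz => (hφ' z (Set.Ico_subset_Icc_self hz)).hasDerivWithinAt)
    x₂ ⟨h12, le_rfl⟩
  have hφ1 : φ x₁ = -x₁ := by
    simp [hφdef, intervalIntegral.integral_same]
  rw [hφ1] at hconst
  have : (∫ w in (η x₁)..(η x₂), (Gfun 𝔣 E w)⁻¹) - x₂ = -x₁ := hconst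
  linarith

lemma Ginv_contOn {𝔣 : ℝ → ℝ} (hcf : Continuous 𝔣) {η0 η1 E : ℝ}
    (hposF : ∀ w ∈ Set.Ioo η0 η1, 0 < Ffun 𝔣 w + E) :
    ContinuousOn (fun w => (Gfun 𝔣 E w)⁻¹) (Set.Ioo η0 η1) := by
  have hFc : Continuous (Ffun 𝔣) := by
    rw [continuous_iff_continuousAt]
    exact fun v => (Ffun_hasDerivAt hcf v).continuousAt
  apply ContinuousOn.inv₀
  · exact (Real.continuous_sqrt.comp (continuous_const.mul (hFc.add continuous_const))).continuousOn
  · exact fun w hw => (Real.sqrt_pos.2 (by linarith [hposF w hw])).ne'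

lemma key_comp {𝔣 : ℝ → ℝ} (hcf : Continuous 𝔣) {η0 η1 : ℝ}
    {η η' ζ ζ' : ℝ → ℝ} {Eη Eζ : ℝ}
    (hη : Sol 𝔣 η0 η1 η η') (hζ : Sol 𝔣 η0 η1 ζ ζ')
    (hmη : StrictMonoOn η (Set.Icc 0 1)) (hmζ : StrictMonoOn ζ (Set.Icc 0 1))
    (hEη : ∀ x ∈ Set.Ioo (0:ℝ) 1, 0 < η' x ∧ η' x = Gfun 𝔣 Eη (η x))
    (hEζ : ∀ x ∈ Set.Ioo (0:ℝ) 1, 0 < ζ' x ∧ ζ' x = Gfun 𝔣 Eζ (ζ x))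
    (hFη : ∀ w ∈ Set.Ioo η0 η1, 0 < Ffun 𝔣 w + Eη ∧ ∃ x ∈ Set.Ioo (0:ℝ) 1, η x = w)
    (hFζ : ∀ w ∈ Set.Ioo η0 η1, 0 < Ffun 𝔣 w + Eζ ∧ ∃ x ∈ Set.Ioo (0:ℝ) 1, ζ x = w)
    (hle : Eη ≤ Eζ)
    {x y : ℝ} (hx : x ∈ Set.Ioo (0:ℝ) 1) (hy : y ∈ Set.Ioo (0:ℝ) 1)
    (hveq : η x = ζ y) : x = y := by
  have hsubI : Set.Ioo (0:ℝ) 1 ⊆ Set.Icc (0:ℝ) 1 := Set.Ioo_subset_Icc_self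
  have hmemη : ∀ z ∈ Set.Ioo (0:ℝ) 1, η z ∈ Set.Ioo η0 η1 := fun z hz =>
    ⟨(hη.pinch z hz).1, (hη.pinch z hz).2⟩
  have hmemζ : ∀ z ∈ Set.Ioo (0:ℝ) 1, ζ z ∈ Set.Ioo η0 η1 := fun z hz =>
    ⟨(hζ.pinch z hz).1, (hζ.pinch z hz).2⟩
  have hposη : ∀ w ∈ Set.Ioo η0 η1, 0 < Ffun 𝔣 w + Eη := fun w hw => (hFη w hw).1
  have hposζ : ∀ w ∈ Set.Ioo η0 η1, 0 < Ffun 𝔣 w + Eζ := fun w hw => (hFζ w hw).1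
  have hint : ∀ (E' : ℝ), (∀ w ∈ Set.Ioo η0 η1, 0 < Ffun 𝔣 w + E') →
      ∀ a b : ℝ, a ∈ Set.Ioo η0 η1 → b ∈ Set.Ioo η0 η1 →
      IntervalIntegrable (fun w => (Gfun 𝔣 E' w)⁻¹) volume a b := fun E' hp a b ha hb =>
    ((Ginv_contOn hcf hp).mono (Set.ordConnected_Ioo.uIcc_subset ha hb)).intervalIntegrable
  have hptw : ∀ w ∈ Set.Ioo η0 η1, (Gfun 𝔣 Eζ w)⁻¹ ≤ (Gfun 𝔣 Eη w)⁻¹ := by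
    intro w hw
    have h1 : 0 < Gfun 𝔣 Eη w := Real.sqrt_pos.2 (by linarith [hposη w hw])
    have h2 : Gfun 𝔣 Eη w ≤ Gfun 𝔣 Eζ w := Real.sqrt_le_sqrt (by linarith)
    exact inv_anti₀ h1 h2
  apply le_antisymm
  · -- x ≤ y
    apply le_of_forall_pos_le_add
    intro ε hε
    set δ : ℝ := min ε ((1 - y)/2) with hδdef
    have hδ0 : 0 < δ := lt_min hε (by linarith [hy.2])
    have h1δ : y < 1 - δ := by
      have : δ ≤ (1 - y)/2 := min_le_right _ _
      linarith [hy.2]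
    have h1δI : (1 - δ) ∈ Set.Ioo (0:ℝ) 1 := ⟨by linarith [hy.1], by linarith⟩
    have hwI : ζ (1 - δ) ∈ Set.Ioo η0 η1 := hmemζ _ h1δI
    have hvw : ζ y < ζ (1 - δ) := hmζ (hsubI hy) (hsubI h1δI) h1δ
    obtain ⟨xw, hxwI, hxw⟩ := (hFη _ hwI).2
    have hxxw : x < xw := by
      apply (hmη.lt_iff_lt (hsubI hx) (hsubI hxwI)).1
      rw [hxw, hveq]
      exact hvw
    have I1 : ∫ w in (ζ y)..(ζ (1 - δ)), (Gfun 𝔣 Eη w)⁻¹ = xw - x := by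
      have := time_eq hcf hη.deriv hmemη hposη (fun z hz => (hEη z hz).2) hx hxwI hxxw.le
      rw [hxw, hveq] at this
      exact this
    have I2 : ∫ w in (ζ y)..(ζ (1 - δ)), (Gfun 𝔣 Eζ w)⁻¹ = (1 - δ) - y := by
      exact time_eq hcf hζ.deriv hmemζ hposζ (fun z hz => (hEζ z hz).2) hy h1δI h1δ.le
    have hmono : (∫ w in (ζ y)..(ζ (1 - δ)), (Gfun 𝔣 Eζ w)⁻¹) ≤
        ∫ w in (ζ y)..(ζ (1 - δ)), (Gfun 𝔣 Eη w)⁻¹ := by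
      apply intervalIntegral.integral_mono_on hvw.le
        (hint Eζ hposζ _ _ (hmemζ y hy) hwI) (hint Eη hposη _ _ (hmemζ y hy) hwI)
      intro w hw
      exact hptw w (Set.ordConnected_Ioo.out (hmemζ y hy) hwI hw)
    have hδε : δ ≤ ε := min_le_left _ _
    have hxw1 : xw < 1 := hxwI.2
    rw [I1, I2] at hmono
    linarith
  · -- y ≤ x
    apply le_of_forall_pos_le_add
    intro ε hε
    set δ : ℝ := min ε (y/2) with hδdef
    have hδ0 : 0 < δ := lt_min hε (by linarith [hy.1])
    have hδy : δ < y := by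
      have : δ ≤ y/2 := min_le_right _ _
      linarith [hy.1]
    have hδI : δ ∈ Set.Ioo (0:ℝ) 1 := ⟨hδ0, hδy.trans hy.2⟩
    have huI : ζ δ ∈ Set.Ioo η0 η1 := hmemζ _ hδI
    have huv : ζ δ < ζ y := hmζ (hsubI hδI) (hsubI hy) hδy
    obtain ⟨xu, hxuI, hxu⟩ := (hFη _ huI).2
    have hxux : xu < x := by
      apply (hmη.lt_iff_lt (hsubI hxuI) (hsubI hx)).1
      rw [hxu, hveq]
      exact huv
    have I1 : ∫ w in (ζ δ)..(ζ y), (Gfun 𝔣 Eη w)⁻¹ = x - xu := by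
      have := time_eq hcf hη.deriv hmemη hposη (fun z hz => (hEη z hz).2) hxuI hx hxux.le
      rw [hxu, hveq] at this
      exact this
    have I2 : ∫ w in (ζ δ)..(ζ y), (Gfun 𝔣 Eζ w)⁻¹ = y - δ := by
      exact time_eq hcf hζ.deriv hmemζ hposζ (fun z hz => (hEζ z hz).2) hδI hy hδy.le
    have hmono : (∫ w in (ζ δ)..(ζ y), (Gfun 𝔣 Eζ w)⁻¹) ≤
        ∫ w in (ζ δ)..(ζ y), (Gfun 𝔣 Eη w)⁻¹ := by
      apply intervalIntegral.integral_mono_on huv.le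
        (hint Eζ hposζ _ _ huI (hmemζ y hy)) (hint Eη hposη _ _ huI (hmemζ y hy))
      intro w hw
      exact hptw w (Set.ordConnected_Ioo.out huI (hmemζ y hy) hw)
    have hδε : δ ≤ ε := min_le_left _ _
    have hxu0 : 0 < xu := hxuI.1
    rw [I1, I2] at hmono
    linarith

/-- If `𝔣` is Lipschitz, `η0 < η1`, and `η ∈ C²(0,1) ∩ C[0,1]` solves `η'' = 𝔣(η)` on
`(0,1)` with `η(0) = η0`, `η(1) = η1` and `η0 < η < η1` in `(0,1)`, then `η` is strictly
increasing on `[0,1]` and is the unique such solution. -/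
theorem stmt_1 (𝔣 : ℝ → ℝ) (K : NNReal) (hf : LipschitzWith K 𝔣)
    (η0 η1 : ℝ) (hη01 : η0 < η1)
    (η η' : ℝ → ℝ)
    (hcont : ContinuousOn η (Set.Icc 0 1))
    (hderiv : ∀ x ∈ Set.Ioo (0:ℝ) 1, HasDerivAt η (η' x) x)
    (hderiv2 : ∀ x ∈ Set.Ioo (0:ℝ) 1, HasDerivAt η' (𝔣 (η x)) x)
    (hb0 : η 0 = η0) (hb1 : η 1 = η1)
    (hpinch : ∀ x ∈ Set.Ioo (0:ℝ) 1, η0 < η x ∧ η x < η1) :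
    StrictMonoOn η (Set.Icc 0 1)
    ∧ ∀ (ζ ζ' : ℝ → ℝ),
        ContinuousOn ζ (Set.Icc 0 1) →
        (∀ x ∈ Set.Ioo (0:ℝ) 1, HasDerivAt ζ (ζ' x) x) →
        (∀ x ∈ Set.Ioo (0:ℝ) 1, HasDerivAt ζ' (𝔣 (ζ x)) x) →
        ζ 0 = η0 → ζ 1 = η1 →
        (∀ x ∈ Set.Ioo (0:ℝ) 1, η0 < ζ x ∧ ζ x < η1) →
        Set.EqOn η ζ (Set.Icc 0 1) := by
  have hcf : Continuous 𝔣 := hf.continuous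
  have hsη : Sol 𝔣 η0 η1 η η' := ⟨hcont, hderiv, hderiv2, hb0, hb1, hpinch⟩
  obtain ⟨hmη, Eη, hEη, hFη⟩ := sol_props hf hη01 hsη
  refine ⟨hmη, ?_⟩
  intro ζ ζ' hζc hζd hζd2 hζ0 hζ1 hζp
  have hsζ : Sol 𝔣 η0 η1 ζ ζ' := ⟨hζc, hζd, hζd2, hζ0, hζ1, hζp⟩
  obtain ⟨hmζ, Eζ, hEζ, hFζ⟩ := sol_props hf hη01 hsζ
  intro x hx
  rcases eq_or_lt_of_le hx.1 with h0 | h0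
  · show η x = ζ x
    rw [← h0, hb0, hζ0]
  rcases eq_or_lt_of_le hx.2 with h1 | h1
  · show η x = ζ x
    rw [h1, hb1, hζ1]
  have hxI : x ∈ Set.Ioo (0:ℝ) 1 := ⟨h0, h1⟩
  have hvI : η x ∈ Set.Ioo η0 η1 := ⟨(hpinch x hxI).1, (hpinch x hxI).2⟩
  obtain ⟨y, hyI, hyv⟩ := (hFζ _ hvI).2
  have hxy : x = y := by
    rcases le_total Eη Eζ with h | h
    · exact key_comp hcf hsη hsζ hmη hmζ hEη hEζ hFη hFζ h hxI hyI hyv.symm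
    · exact (key_comp hcf hsζ hsη hmζ hmη hEζ hEη hFζ hFη h hyI hxI hyv).symm
  subst hxy
  exact hyv.symm
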